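/- The set Λ = {(z₁,z₂,z₃) ∈ O³ : z₁ ≡ z₂ ≡ z₃ (mod α) and z₁ + z₂ + z₃ ≡ 0 (mod ᾱ)} is an O-submodule of O³, where O = ℤ[α] with α = (1+i√7)/2; moreover Λ equals the O-module generated by the three vectors φ₁ = (0, α, -α), φ₂ = (0, 0, 2), φ₃ = (1, 1, ᾱ). -/

import Mathlib

noncomputable def alpha : ℂ := (1 + Complex.I * Real.sqrt 7) / 2
noncomputable def alphaBar : ℂ := (1 - Complex.I * Real.sqrt 7) / 2

/-- `O = ℤ[α]` as a subring of `ℂ`. -/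
noncomputable def O : Subring ℂ := Subring.closure {alpha}

lemma sqrt7_sq : ((Real.sqrt 7 : ℝ) : ℂ)^2 = 7 := by
  rw [← Complex.ofReal_pow, Real.sq_sqrt (by norm_num)]; norm_num

lemma alphaBar_eq : alphaBar = 1 - alpha := by unfold alpha alphaBar; ring

lemma alpha_mul : alpha * alphaBar = 2 := by
  unfold alpha alphaBar
  have hI := Complex.I_sq
  linear_combination (-(1:ℂ)/4 * ((Real.sqrt 7:ℝ):ℂ)^2) * hI + (1/4 : ℂ) * sqrt7_sq

lemma alpha_sq : alpha^2 = alpha - 2 := by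
  have h := alpha_mul
  rw [alphaBar_eq] at h
  linear_combination -h

lemma mem_O_iff (x : ℂ) : x ∈ O ↔ ∃ m n : ℤ, x = m + n * alpha := by
  constructor
  · intro hx
    refine Subring.closure_induction ?_ ?_ ?_ ?_ ?_ ?_ hx
    · rintro y rfl; exact ⟨0, 1, by push_cast; ring⟩
    · exact ⟨0, 0, by push_cast; ring⟩
    · exact ⟨1, 0, by push_cast; ring⟩
    · rintro a b _ _ ⟨m, n, rfl⟩ ⟨p, q, rfl⟩
      exact ⟨m + p, n + q, by push_cast; ring⟩
    · rintro a _ ⟨m, n, rfl⟩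
      exact ⟨-m, -n, by push_cast; ring⟩
    · rintro a b _ _ ⟨m, n, rfl⟩ ⟨p, q, rfl⟩
      refine ⟨m * p - 2 * n * q, m * q + n * p + n * q, ?_⟩
      push_cast
      linear_combination (n * q : ℂ) * alpha_sq
  · rintro ⟨m, n, rfl⟩
    exact O.add_mem (intCast_mem O m)
      (O.mul_mem (intCast_mem O n) (Subring.subset_closure rfl))

lemma inj_lemma {m n p q : ℤ} (h : (m : ℂ) + n * alpha = p + q * alpha) :
    m = p ∧ n = q := by
  have h7 : Real.sqrt 7 ≠ 0 := by
    positivity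
  have ha_re : alpha.re = 1 / 2 := by simp [alpha, Complex.div_re, Complex.normSq]
  have ha_im : alpha.im = Real.sqrt 7 / 2 := by simp [alpha, Complex.div_im, Complex.normSq]
  have him := congrArg Complex.im h
  have hre := congrArg Complex.re h
  simp only [Complex.add_im, Complex.add_re, Complex.mul_im, Complex.mul_re,
    Complex.intCast_re, Complex.intCast_im, ha_re, ha_im] at him hre

  have hn : (n : ℝ) = q := by
    have h2 : (n : ℝ) * (Real.sqrt 7 / 2) = (q : ℝ) * (Real.sqrt 7 / 2) := by linarith
    exact mul_right_cancel₀ (by positivity) h2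
  have hn' : n = q := by exact_mod_cast hn
  subst hn'
  refine ⟨?_, rfl⟩
  have : (m : ℝ) = p := by linarith [hre]
  exact_mod_cast this

lemma alpha_mem : alpha ∈ O := Subring.subset_closure rfl
lemma alphaBar_mem : alphaBar ∈ O := by
  rw [alphaBar_eq]; exact O.sub_mem O.one_mem alpha_mem
lemma two_mem : (2:ℂ) ∈ O := by
  have := O.add_mem O.one_mem O.one_mem
  rw [one_add_one_eq_two] at this; exact this

/-- The lattice `Λ`. -/
noncomputable def Lam : Set (Fin 3 → ℂ) :=
  {z | (∀ i, z i ∈ O) ∧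
    (∃ o ∈ O, z 0 - z 1 = alpha * o) ∧ (∃ o ∈ O, z 1 - z 2 = alpha * o) ∧
    (∃ o ∈ O, z 0 + z 1 + z 2 = alphaBar * o)}

noncomputable def phi1 : Fin 3 → ℂ := ![0, alpha, -alpha]
noncomputable def phi2 : Fin 3 → ℂ := ![0, 0, 2]
noncomputable def phi3 : Fin 3 → ℂ := ![1, 1, alphaBar]

lemma phi1_mem : phi1 ∈ Lam := by
  refine ⟨?_, ⟨-1, O.neg_mem O.one_mem, ?_⟩, ⟨2, two_mem, ?_⟩, ⟨0, O.zero_mem, ?_⟩⟩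
  · intro i; fin_cases i <;> simp [phi1] <;>
      first
      | exact O.zero_mem | exact alpha_mem | exact O.neg_mem alpha_mem
  · show (0:ℂ) - alpha = alpha * (-1); ring
  · show alpha - -alpha = alpha * 2; ring
  · show (0:ℂ) + alpha + -alpha = alphaBar * 0; ring

lemma phi2_mem : phi2 ∈ Lam := by
  refine ⟨?_, ⟨0, O.zero_mem, ?_⟩, ⟨-alphaBar, O.neg_mem alphaBar_mem, ?_⟩,
    ⟨alpha, alpha_mem, ?_⟩⟩
  · intro i; fin_cases i <;> simp [phi2] <;>
      first | exact O.zero_mem | exact two_mem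
  · show (0:ℂ) - 0 = alpha * 0; ring
  · show (0:ℂ) - 2 = alpha * (-alphaBar); linear_combination alpha_mul
  · show (0:ℂ) + 0 + 2 = alphaBar * alpha; linear_combination -alpha_mul

lemma phi3_mem : phi3 ∈ Lam := by
  refine ⟨?_, ⟨0, O.zero_mem, ?_⟩, ⟨1, O.one_mem, ?_⟩,
    ⟨alpha + 1, O.add_mem alpha_mem O.one_mem, ?_⟩⟩
  · intro i; fin_cases i <;> simp [phi3] <;>
      first | exact O.one_mem | exact alphaBar_mem
  · show (1:ℂ) - 1 = alpha * 0; ring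
  · show (1:ℂ) - alphaBar = alpha * 1; rw [alphaBar_eq]; ring
  · show (1:ℂ) + 1 + alphaBar = alphaBar * (alpha + 1); linear_combination -alpha_mul

/-- `Λ` is an `O`-submodule of `O³`, and it is generated over `O` by `φ₁, φ₂, φ₃`. -/
theorem stmt_1 :
    ((0 : Fin 3 → ℂ) ∈ Lam) ∧
    (∀ x y, x ∈ Lam → y ∈ Lam → x + y ∈ Lam) ∧
    (∀ c : ℂ, c ∈ O → ∀ x, x ∈ Lam → (fun i => c * x i) ∈ Lam) ∧
    Lam = {z | ∃ a ∈ O, ∃ b ∈ O, ∃ c ∈ O,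
      z = fun i => a * phi1 i + b * phi2 i + c * phi3 i} := by
  have hzero : (0 : Fin 3 → ℂ) ∈ Lam :=
    ⟨fun i => by simpa using O.zero_mem, ⟨0, O.zero_mem, by simp⟩,
      ⟨0, O.zero_mem, by simp⟩, ⟨0, O.zero_mem, by simp⟩⟩
  have hadd : ∀ x y, x ∈ Lam → y ∈ Lam → x + y ∈ Lam := by
    rintro x y ⟨hx, ⟨o1, ho1, e1⟩, ⟨o2, ho2, e2⟩, ⟨o3, ho3, e3⟩⟩
      ⟨hy, ⟨p1, hp1, f1⟩, ⟨p2, hp2, f2⟩, ⟨p3, hp3, f3⟩⟩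
    refine ⟨fun i => O.add_mem (hx i) (hy i),
      ⟨o1 + p1, O.add_mem ho1 hp1, ?_⟩, ⟨o2 + p2, O.add_mem ho2 hp2, ?_⟩,
      ⟨o3 + p3, O.add_mem ho3 hp3, ?_⟩⟩ <;>
    simp only [Pi.add_apply]
    · linear_combination e1 + f1
    · linear_combination e2 + f2
    · linear_combination e3 + f3
  have hsmul : ∀ c : ℂ, c ∈ O → ∀ x, x ∈ Lam → (fun i => c * x i) ∈ Lam := by
    rintro c hc x ⟨hx, ⟨o1, ho1, e1⟩, ⟨o2, ho2, e2⟩, ⟨o3, ho3, e3⟩⟩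
    refine ⟨fun i => O.mul_mem hc (hx i),
      ⟨c * o1, O.mul_mem hc ho1, ?_⟩, ⟨c * o2, O.mul_mem hc ho2, ?_⟩,
      ⟨c * o3, O.mul_mem hc ho3, ?_⟩⟩
    · show c * x 0 - c * x 1 = alpha * (c * o1); linear_combination c * e1
    · show c * x 1 - c * x 2 = alpha * (c * o2); linear_combination c * e2
    · show c * x 0 + c * x 1 + c * x 2 = alphaBar * (c * o3); linear_combination c * e3
  refine ⟨hzero, hadd, hsmul, ?_⟩
  ext z
  constructor
  · rintro ⟨hmem, ⟨o1, ho1, e1⟩, ⟨o2, ho2, e2⟩, ⟨o3, ho3, e3⟩⟩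
    obtain ⟨m0, n0, h0⟩ := (mem_O_iff _).1 (hmem 0)
    obtain ⟨m1, n1, h1⟩ := (mem_O_iff _).1 (hmem 1)
    obtain ⟨m2, n2, h2⟩ := (mem_O_iff _).1 (hmem 2)
    obtain ⟨p1, q1, hr1⟩ := (mem_O_iff _).1 ho1
    obtain ⟨p2, q2, hr2⟩ := (mem_O_iff _).1 ho2
    obtain ⟨p3, q3, hr3⟩ := (mem_O_iff _).1 ho3
    have E1 := inj_lemma (show ((m0 - m1 : ℤ) : ℂ) + ((n0 - n1 : ℤ) : ℂ) * alpha
        = ((-2 * q1 : ℤ) : ℂ) + ((p1 + q1 : ℤ) : ℂ) * alpha by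
      push_cast; linear_combination e1 - h0 + h1 + alpha * hr1 + (q1 : ℂ) * alpha_sq)
    have E2 := inj_lemma (show ((m1 - m2 : ℤ) : ℂ) + ((n1 - n2 : ℤ) : ℂ) * alpha
        = ((-2 * q2 : ℤ) : ℂ) + ((p2 + q2 : ℤ) : ℂ) * alpha by
      push_cast; linear_combination e2 - h1 + h2 + alpha * hr2 + (q2 : ℂ) * alpha_sq)
    have E3 := inj_lemma (show ((m0 + m1 + m2 : ℤ) : ℂ) + ((n0 + n1 + n2 : ℤ) : ℂ) * alpha
        = ((p3 + 2 * q3 : ℤ) : ℂ) + ((-p3 : ℤ) : ℂ) * alpha by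
      push_cast
      linear_combination e3 - h0 - h1 - h2 + alphaBar * hr3
        + ((p3 : ℂ) + (q3 : ℂ) * alpha) * alphaBar_eq - (q3 : ℂ) * alpha_sq)
    obtain ⟨hm1, -⟩ := E1
    obtain ⟨hm2, -⟩ := E2
    obtain ⟨hm3, -⟩ := E3
    obtain ⟨k, hk⟩ : ∃ k, p3 - m0 = 2 * k := ⟨(p3 - m0) / 2, by omega⟩
    have hk' : (p3 : ℂ) - m0 = 2 * k := by exact_mod_cast hk
    set t : ℂ := ((q3 - n0 + k : ℤ) : ℂ) + ((-k : ℤ) : ℂ) * alpha with ht_def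
    have ht : t ∈ O := (mem_O_iff t).2 ⟨_, _, rfl⟩
    have htkey : o3 - z 0 = alpha * t := by
      rw [ht_def]; push_cast
      linear_combination hr3 - h0 + hk' + (k : ℂ) * alpha_sq
    refine ⟨-o1, O.neg_mem ho1, t - z 0, O.sub_mem ht (hmem 0), z 0, hmem 0, ?_⟩
    funext i
    fin_cases i <;> simp [phi1, phi2, phi3]
    · linear_combination -e1
    · linear_combination e1 + e3 + alphaBar * htkey + t * alpha_mul
  · rintro ⟨a, ha, b, hb, c, hc, rfl⟩
    exact hadd (fun i => a * phi1 i + b * phi2 i) (fun i => c * phi3 i)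
      (hadd (fun i => a * phi1 i) (fun i => b * phi2 i)
        (hsmul a ha _ phi1_mem) (hsmul b hb _ phi2_mem))
      (hsmul c hc _ phi3_mem)
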